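/- Let q be a power of a prime p and let σ ∈ GL_n(q) act indecomposably on V = F_q^n (i.e., V is not a direct sum of two nonzero σ-invariant subspaces). Then the order of σ divides p^b(q^u − 1) for some divisor u of n and some b ≥ 0 with p^{b−1} ≤ n/u − 1 whenever b > 0; moreover ord(σ) ≤ q^n − 1. -/

import Mathlib

open Polynomial

private lemma auxCommute {F : Type*} [Field F] {n : ℕ} (M : Matrix (Fin n) (Fin n) F)
    (g : F[X]) : aeval M g * M = M * aeval M g := by
  calc aeval M g * M = aeval M (g * X) := by rw [map_mul, aeval_X]
    _ = aeval M (X * g) := by rw [mul_comm g]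
    _ = M * aeval M g := by rw [map_mul, aeval_X]

private lemma auxInv {F : Type*} [Field F] {n : ℕ} (M : Matrix (Fin n) (Fin n) F)
    (g : F[X]) : ∀ v ∈ LinearMap.ker (aeval M g).mulVecLin,
      M.mulVec v ∈ LinearMap.ker (aeval M g).mulVecLin := by
  intro v hv
  rw [LinearMap.mem_ker, Matrix.mulVecLin_apply] at *
  rw [Matrix.mulVec_mulVec, auxCommute, ← Matrix.mulVec_mulVec, hv, Matrix.mulVec_zero]

private lemma auxIsCompl {F : Type*} [Field F] {n : ℕ} (M : Matrix (Fin n) (Fin n) F)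
    {g h : F[X]} (hco : IsCoprime g h) (hann : aeval M (g * h) = 0) :
    IsCompl (LinearMap.ker (aeval M g).mulVecLin) (LinearMap.ker (aeval M h).mulVecLin) := by
  obtain ⟨a, b, hab⟩ := hco
  have key : ∀ v : Fin n → F,
      (aeval M (a * g)).mulVec v + (aeval M (b * h)).mulVec v = v := by
    intro v
    rw [← Matrix.add_mulVec, ← map_add, hab, map_one, Matrix.one_mulVec]
  constructor
  · rw [Submodule.disjoint_def]
    intro v hvg hvh
    rw [LinearMap.mem_ker, Matrix.mulVecLin_apply] at hvg hvh
    have hk := key v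
    rw [map_mul, map_mul, ← Matrix.mulVec_mulVec, ← Matrix.mulVec_mulVec, hvg, hvh,
      Matrix.mulVec_zero, Matrix.mulVec_zero, add_zero] at hk
    exact hk.symm
  · rw [codisjoint_iff_le_sup]
    intro v _
    refine Submodule.mem_sup.2 ⟨(aeval M (b * h)).mulVec v, ?_, (aeval M (a * g)).mulVec v, ?_, ?_⟩
    · rw [LinearMap.mem_ker, Matrix.mulVecLin_apply, Matrix.mulVec_mulVec, ← map_mul]
      have h2 : g * (b * h) = b * (g * h) := by ring
      rw [h2, map_mul, hann, mul_zero, Matrix.zero_mulVec]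
    · rw [LinearMap.mem_ker, Matrix.mulVecLin_apply, Matrix.mulVec_mulVec, ← map_mul]
      have h2 : h * (a * g) = a * (g * h) := by ring
      rw [h2, map_mul, hann, mul_zero, Matrix.zero_mulVec]
    · rw [add_comm]; exact key v

private lemma auxEvalCharmatrix {L : Type*} [CommRing L] {n : ℕ}
    (A : Matrix (Fin n) (Fin n) L) (a : L) :
    (Matrix.charpoly A).eval a = Matrix.det (a • (1 : Matrix (Fin n) (Fin n) L) - A) := by
  rw [Matrix.charpoly, ← Polynomial.coe_evalRingHom, RingHom.map_det]
  congr 1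
  ext i j
  rcases eq_or_ne i j with rfl | hij
  · simp [Matrix.charmatrix_apply_eq, Matrix.one_apply]
  · simp [Matrix.charmatrix_apply_ne _ _ _ hij, Matrix.one_apply_ne hij]

private lemma auxDet {F : Type*} [Field F] {n : ℕ} (M : Matrix (Fin n) (Fin n) F)
    {g : F[X]} (hg : Irreducible g) (hdvd : g ∣ M.charpoly) :
    (aeval M g).det = 0 := by
  haveI : Fact (Irreducible g) := ⟨hg⟩
  set L := AdjoinRoot g with hL
  set φ := algebraMap F L with hφ
  set x := AdjoinRoot.root g with hx
  have hroot : (g.map φ).eval x = 0 := by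
    rw [eval_map, hφ, AdjoinRoot.algebraMap_eq]
    exact AdjoinRoot.eval₂_root g
  obtain ⟨c, hc⟩ := hdvd
  -- eval of mapped charpoly at x is zero
  have hcp0 : (Matrix.charpoly (M.map φ)).eval x = 0 := by
    rw [Matrix.charpoly_map, hc, Polynomial.map_mul, eval_mul, hroot, zero_mul]
  have hdet1 : Matrix.det (x • (1 : Matrix (Fin n) (Fin n) L) - M.map φ) = 0 := by
    rw [← auxEvalCharmatrix]; exact hcp0
  -- factor g over L
  obtain ⟨r, hr⟩ : (X - C x) ∣ g.map φ := dvd_iff_isRoot.2 hroot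
  have hmap : (aeval M g).map φ = aeval (M.map φ) g := by
    have h1 := Polynomial.aeval_algHom_apply ((Algebra.ofId F L).mapMatrix) M g
    have e : (⇑(Algebra.ofId F L)) = ⇑φ := funext fun r => by rw [hφ]; exact Algebra.ofId_apply (R := F) (A := L) r
    simpa [AlgHom.mapMatrix_apply, e] using h1.symm
  have hdet2 : ((aeval M g).map φ).det = 0 := by
    rw [hmap, ← aeval_map_algebraMap L, hr, map_mul, map_sub, aeval_X, aeval_C,
      Matrix.det_mul]
    have : M.map φ - algebraMap L (Matrix (Fin n) (Fin n) L) x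
        = -(x • (1 : Matrix (Fin n) (Fin n) L) - M.map φ) := by
      ext i j
      rcases eq_or_ne i j with rfl | hij
      · simp [Matrix.algebraMap_matrix_apply, Matrix.one_apply, Algebra.algebraMap_eq_smul_one]
      · simp [Matrix.algebraMap_matrix_apply, hij, Matrix.one_apply_ne hij]; exact (neg_neg _).symm
    rw [this, Matrix.det_neg, hdet1, mul_zero, zero_mul]
  have hfin : φ ((aeval M g).det) = 0 := by
    rw [RingHom.map_det, RingHom.mapMatrix_apply]; exact hdet2
  exact (_root_.map_eq_zero φ).1 hfin

private lemma auxArith {Q : ℕ} (hQ : 2 ≤ Q) : ∀ s : ℕ, Q * (s + 1) * (Q - 1) + 1 ≤ Q ^ (s + 2) := by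
  obtain ⟨R, rfl⟩ : ∃ R, Q = R + 2 := ⟨Q - 2, by omega⟩
  have e : R + 2 - 1 = R + 1 := by omega
  intro s
  induction s with
  | zero => rw [e]; rw [pow_two]; nlinarith
  | succ s ih =>
    rw [e] at ih ⊢
    have h2 : (R+2)^2 ≤ (R+2)^(s+2) := Nat.pow_le_pow_right (by omega) (by omega)
    have h3 : (R+2)^(s+1+2) = (R+2)^(s+2) * (R+2) := by ring
    have h1 : (R+2)^(s+2) + (R+2)*(R+1) ≤ (R+2)^(s+1+2) := by nlinarith
    calc (R+2)*(s+1+1)*(R+1)+1 = ((R+2)*(s+1)*(R+1)+1) + (R+2)*(R+1) := by ring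
      _ ≤ (R+2)^(s+2) + (R+2)*(R+1) := by omega
      _ ≤ (R+2)^(s+1+2) := h1

/-- If `σ ∈ GL_n(q)` acts indecomposably on `F_q^n`, then `ord(σ)` divides
`p^b (q^u − 1)` with `u ∣ n`, `p^{b-1} ≤ n/u − 1` if `b > 0`, and `ord(σ) ≤ q^n − 1`. -/
theorem stmt13 {F : Type*} [Field F] [Fintype F] (p : ℕ) [Fact p.Prime] [CharP F p]
    (n : ℕ) (hn : 0 < n) (σ : GL (Fin n) F)
    (hind : ∀ U W : Submodule F (Fin n → F),
      (∀ v ∈ U, (σ : Matrix (Fin n) (Fin n) F).mulVec v ∈ U) →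
      (∀ v ∈ W, (σ : Matrix (Fin n) (Fin n) F).mulVec v ∈ W) →
      IsCompl U W → U = ⊥ ∨ W = ⊥) :
    ∃ u b : ℕ, u ∣ n ∧ orderOf σ ∣ p ^ b * (Fintype.card F ^ u - 1) ∧
      (0 < b → p ^ (b - 1) ≤ n / u - 1) ∧ orderOf σ ≤ Fintype.card F ^ n - 1 := by
  classical
  have hpp : p.Prime := Fact.out
  set q := Fintype.card F with hq
  have hq2 : 2 ≤ q := Fintype.one_lt_card
  obtain ⟨k, -, hqpk⟩ := FiniteField.card F p
  have hpq : p ≤ q := by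
    rw [hq, hqpk]
    calc p = p ^ 1 := (pow_one p).symm
      _ ≤ p ^ (k : ℕ) := Nat.pow_le_pow_right hpp.one_lt.le k.one_le
  set M : Matrix (Fin n) (Fin n) F := (σ : Matrix (Fin n) (Fin n) F) with hM
  have hMunit : IsUnit M.det := (Matrix.isUnit_iff_isUnit_det M).1 ⟨σ, rfl⟩
  set P := M.charpoly with hP
  have hPmonic : P.Monic := M.charpoly_monic
  have hPdeg : P.natDegree = n := by
    rw [hP, M.charpoly_natDegree_eq_dim, Fintype.card_fin]
  have hP0 : P ≠ 0 := hPmonic.ne_zero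
  have hPnu : ¬ IsUnit P := by
    intro hu
    rw [hPmonic.isUnit_iff] at hu
    rw [hu, natDegree_one] at hPdeg
    omega
  obtain ⟨f₀, hf₀irr, hf₀dvd⟩ := WfDvdMonoid.exists_irreducible_factor hPnu hP0
  set f := normalize f₀ with hf
  have hfassoc : Associated f₀ f := (normalize_associated f₀).symm
  have hfirr : Irreducible f := hfassoc.irreducible hf₀irr
  have hfmonic : f.Monic := Polynomial.monic_normalize hf₀irr.ne_zero
  have hfdvd : f ∣ P := (hfassoc.symm.dvd).trans hf₀dvd
  obtain ⟨t, h, hfh, hPfact⟩ := WfDvdMonoid.max_power_factor hP0 hfirr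
  have ht1 : 1 ≤ t := by
    rcases Nat.eq_zero_or_pos t with ht0 | h1
    · exfalso; apply hfh; rw [ht0, pow_zero, one_mul] at hPfact; rwa [← hPfact]
    · exact h1
  have hhmonic : h.Monic := (hfmonic.pow t).of_mul_monic_left (hPfact ▸ hPmonic)
  have hHunit : IsUnit h := by
    by_contra hnu
    have hh0 : h ≠ 0 := hhmonic.ne_zero
    obtain ⟨e₀, he₀irr, he₀dvd⟩ := WfDvdMonoid.exists_irreducible_factor hnu hh0
    set e := normalize e₀ with he
    have heassoc : Associated e₀ e := (normalize_associated e₀).symm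
    have heirr : Irreducible e := heassoc.irreducible he₀irr
    have hedvd : e ∣ h := (heassoc.symm.dvd).trans he₀dvd
    have hco : IsCoprime (f ^ t) h := (hfirr.coprime_iff_not_dvd.2 hfh).pow_left
    have hann : aeval M (f ^ t * h) = 0 := by rw [← hPfact]; exact M.aeval_self_charpoly
    rcases hind _ _ (auxInv M (f ^ t)) (auxInv M h) (auxIsCompl M hco hann) with hU | hW
    · have hdet := auxDet M hfirr hfdvd
      obtain ⟨v, hv0, hv⟩ := (Matrix.exists_mulVec_eq_zero_iff).2 hdet
      have hvU : v ∈ LinearMap.ker (aeval M (f ^ t)).mulVecLin := by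
        rw [LinearMap.mem_ker, Matrix.mulVecLin_apply]
        have hs : f ^ t = f ^ (t - 1) * f := by
          rw [← pow_succ]; congr 1; omega
        rw [hs, map_mul, ← Matrix.mulVec_mulVec, hv, Matrix.mulVec_zero]
      rw [hU, Submodule.mem_bot] at hvU
      exact hv0 hvU
    · have hedvdP : e ∣ P := hedvd.trans ⟨f ^ t, by rw [hPfact]; ring⟩
      have hdet := auxDet M heirr hedvdP
      obtain ⟨v, hv0, hv⟩ := (Matrix.exists_mulVec_eq_zero_iff).2 hdet
      have hvW : v ∈ LinearMap.ker (aeval M h).mulVecLin := by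
        rw [LinearMap.mem_ker, Matrix.mulVecLin_apply]
        obtain ⟨s, hs⟩ := hedvd
        have hs' : h = s * e := by rw [hs]; ring
        rw [hs', map_mul, ← Matrix.mulVec_mulVec, hv, Matrix.mulVec_zero]
      rw [hW, Submodule.mem_bot] at hvW
      exact hv0 hvW
  have hh1 : h = 1 := hhmonic.isUnit_iff.1 hHunit
  have hPf : P = f ^ t := by rw [hPfact, hh1, mul_one]
  set u := f.natDegree with hu
  have hupos : 0 < u := hfirr.natDegree_pos
  have hnut : n = t * u := by rw [← hPdeg, hPf, natDegree_pow]
  have hudvd : u ∣ n := ⟨t, by rw [hnut]; ring⟩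
  have hnu_div : n / u = t := by rw [hnut, Nat.mul_div_cancel _ hupos]
  -- the finite field AdjoinRoot f
  haveI : Fact (Irreducible f) := ⟨hfirr⟩
  have hf0 : f ≠ 0 := hfmonic.ne_zero
  let pb := AdjoinRoot.powerBasis hf0
  haveI : Fintype (AdjoinRoot f) := Module.fintypeOfFintype pb.basis
  have hcardL : Fintype.card (AdjoinRoot f) = q ^ u := by
    rw [Module.card_eq_pow_finrank (K := F), pb.finrank]
    rfl
  have hPeval0 : P.eval 0 ≠ 0 := by
    intro h0
    rw [← coeff_zero_eq_eval_zero] at h0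
    rw [hP] at h0
    have := M.det_eq_sign_charpoly_coeff
    rw [h0, mul_zero] at this
    rw [this] at hMunit
    exact hMunit.ne_zero rfl
  have hfeval0 : f.eval 0 ≠ 0 := by
    intro h0
    apply hPeval0
    rw [hPf, eval_pow, h0, zero_pow (by omega)]
  have hxne : (AdjoinRoot.root f) ≠ 0 := by
    intro h0
    have h1 := AdjoinRoot.eval₂_root f
    rw [h0, eval₂_at_zero] at h1
    have h2 : f.coeff 0 = 0 := by
      have : Function.Injective (AdjoinRoot.of f) := (AdjoinRoot.of f).injective
      exact this (by rw [h1, map_zero])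
    rw [coeff_zero_eq_eval_zero] at h2
    exact hfeval0 h2
  have hxpow : (AdjoinRoot.root f) ^ (q ^ u - 1) = 1 := by
    have h1 := FiniteField.pow_card_sub_one_eq_one (AdjoinRoot.root f) hxne
    rwa [hcardL] at h1
  have hminpoly : minpoly F (AdjoinRoot.root f) = f := by
    rw [AdjoinRoot.minpoly_root hf0, hfmonic.leadingCoeff, inv_one, map_one, mul_one]
  have hfdvdX : f ∣ X ^ (q ^ u - 1) - 1 := by
    rw [← hminpoly]
    apply minpoly.dvd
    rw [map_sub, map_one, map_pow, aeval_X, hxpow, sub_self]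
  set b := Nat.clog p t with hb
  have hple : t ≤ p ^ b := Nat.le_pow_clog hpp.one_lt t
  have hbt : 0 < b → 1 < t := by
    intro hbpos
    by_contra hle
    have ht1' : t = 1 := by omega
    rw [hb, ht1', Nat.clog_of_right_le_one le_rfl] at hbpos
    omega
  set Q := q ^ u with hQdef
  have hQ2 : 2 ≤ Q := le_trans hq2 (Nat.le_self_pow (by omega) q)
  set N := p ^ b * (Q - 1) with hN
  have hdvdpoly : f ^ t ∣ (X : F[X]) ^ N - 1 := by
    have h1 : f ^ t ∣ f ^ (p ^ b) := pow_dvd_pow f hple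
    have h2 : (f : F[X]) ^ (p ^ b) ∣ (X ^ (Q - 1) - 1) ^ (p ^ b) :=
      pow_dvd_pow_of_dvd hfdvdX _
    refine h1.trans (h2.trans ?_)
    have h3 : ((X : F[X]) ^ (Q - 1) - 1) ^ (p ^ b)
        = ((X : F[X]) ^ (Q - 1)) ^ (p ^ b) - 1 ^ (p ^ b) :=
      sub_pow_char_pow ((X : F[X]) ^ (Q - 1)) 1 b
    rw [h3, one_pow, ← pow_mul, hN, mul_comm (Q - 1) (p ^ b)]
  have hMN : M ^ N = 1 := by
    obtain ⟨s, hs⟩ := hdvdpoly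
    have hz : aeval M ((X : F[X]) ^ N - 1) = 0 := by
      rw [hs, map_mul, show aeval M (f ^ t) = 0 from by
        rw [← hPf]; exact M.aeval_self_charpoly, zero_mul]
    rw [map_sub, map_one, map_pow, aeval_X] at hz
    exact sub_eq_zero.1 hz
  have hord : orderOf σ ∣ N := by
    rw [← orderOf_units]
    exact orderOf_dvd_iff_pow_eq_one.2 hMN
  have hNpos : 0 < N := by
    apply Nat.mul_pos (pow_pos hpp.pos b)
    omega
  refine ⟨u, b, hudvd, hord, ?_, ?_⟩
  · intro hbpos
    have ht2 : 1 < t := hbt hbpos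
    have hsmall := Nat.pow_pred_clog_lt_self hpp.one_lt ht2
    rw [hnu_div]
    rw [Nat.pred_eq_sub_one, ← hb] at hsmall
    omega
  · have hle1 : orderOf σ ≤ N := Nat.le_of_dvd hNpos hord
    have hqn : q ^ n = Q ^ t := by rw [hQdef, ← pow_mul, hnut, mul_comm]
    rcases Nat.eq_zero_or_pos b with hb0 | hbpos
    · have hQt : Q ≤ Q ^ t := Nat.le_self_pow (by omega) Q
      have hNeq : N = Q - 1 := by rw [hN, hb0, pow_zero, one_mul]
      rw [hqn]
      omega
    · have ht2 : 1 < t := hbt hbpos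
      have hsmall := Nat.pow_pred_clog_lt_self hpp.one_lt ht2
      rw [Nat.pred_eq_sub_one, ← hb] at hsmall
      have hpb : p ^ b ≤ Q * (t - 1) := by
        have hsplit : p ^ b = p * p ^ (b - 1) := by
          rw [← pow_succ']; congr 1; omega
        rw [hsplit]
        exact Nat.mul_le_mul (hpq.trans (Nat.le_self_pow (by omega) q)) (by omega)
      have harith := auxArith hQ2 (t - 2)
      have ht' : t - 2 + 1 = t - 1 := by omega
      have ht'' : t - 2 + 2 = t := by omega
      rw [ht', ht''] at harith
      have hNle : N ≤ Q * (t - 1) * (Q - 1) := by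
        rw [hN]; exact Nat.mul_le_mul_right _ hpb
      rw [hqn]
      omega
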